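/- The constraint reduction rules preserve the property of being a deducibility constraint system: if C is a deducibility constraint system and C reduces in one step (by any of rules C1–C5, with associated substitution θ) to C', then C' is a deducibility constraint system. -/

import Mathlib

/-- Dolev-Yao messages with variables. -/
inductive MsgV : Type
  | name : ℕ → MsgV
  | var  : ℕ → MsgV
  | pair : MsgV → MsgV → MsgV
  | enc  : MsgV → MsgV → MsgV
  deriving DecidableEq

open MsgV

/-- Homomorphic extension of a substitution to messages. -/
def substT (θ : ℕ → MsgV) : MsgV → MsgV
  | name a => name a
  | var x => θ x
  | pair m n => pair (substT θ m) (substT θ n)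
  | enc m k => enc (substT θ m) (substT θ k)

/-- Composition of substitutions: `comp θ ρ` applies θ first, then ρ. -/
def comp (θ ρ : ℕ → MsgV) : ℕ → MsgV := fun x => substT ρ (θ x)

/-- Variables occurring in a message. -/
def varsT : MsgV → Finset ℕ
  | name _ => ∅
  | var x => {x}
  | pair m n => varsT m ∪ varsT n
  | enc m k => varsT m ∪ varsT k

/-- Variables occurring in a finite set of messages. -/
def varsS (S : Finset MsgV) : Finset ℕ := S.biUnion varsT

/-- Ground (variable-free) messages. -/
def groundT (m : MsgV) : Prop := varsT m = ∅

/-- Ground substitutions. -/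
def groundSub (θ : ℕ → MsgV) : Prop := ∀ x, groundT (θ x)

/-- The Dolev-Yao sequent calculus (rules id, p_L, p_R, e_L, e_R). -/
inductive SC : Finset MsgV → MsgV → Prop
  | id {Γ M} : M ∈ Γ → SC Γ M
  | pR {Γ M N} : SC Γ M → SC Γ N → SC Γ (pair M N)
  | eR {Γ M K} : SC Γ M → SC Γ K → SC Γ (enc M K)
  | pL {Γ M N T} : pair M N ∈ Γ →
      SC (insert M (insert N Γ)) T → SC Γ T
  | eL {Γ M K T} : enc M K ∈ Γ → SC Γ K →
      SC (insert M (insert K Γ)) T → SC Γ T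

/-- Right-deducibility: derivability using only id, p_R, e_R. -/
inductive SCR : Finset MsgV → MsgV → Prop
  | id {Γ M} : M ∈ Γ → SCR Γ M
  | pR {Γ M N} : SCR Γ M → SCR Γ N → SCR Γ (pair M N)
  | eR {Γ M K} : SCR Γ M → SCR Γ K → SCR Γ (enc M K)

/-- Deducibility constraints: proper (Σ ⊩? M) or right (Σ ⊩_R? M). -/
inductive Constraint : Type
  | proper : Finset MsgV → MsgV → Constraint
  | rightc : Finset MsgV → MsgV → Constraint
  deriving DecidableEq

/-- Left side of a constraint. -/
def Constraint.lhs : Constraint → Finset MsgV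
  | .proper S _ => S
  | .rightc S _ => S

/-- Right side of a constraint. -/
def Constraint.rhs : Constraint → MsgV
  | .proper _ M => M
  | .rightc _ M => M

/-- Applying a substitution to a constraint. -/
def csub (θ : ℕ → MsgV) : Constraint → Constraint
  | .proper S M => .proper (S.image (substT θ)) (substT θ M)
  | .rightc S M => .rightc (S.image (substT θ)) (substT θ M)

/-- A ground substitution satisfies a single constraint. -/
def holds (θ : ℕ → MsgV) : Constraint → Prop
  | .proper S M => SC (S.image (substT θ)) (substT θ M)
  | .rightc S M => SCR (S.image (substT θ)) (substT θ M)

/-- A solution of a list of constraints: a ground substitution satisfying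
every constraint in the list. -/
def Solution (θ : ℕ → MsgV) (C : List Constraint) : Prop :=
  groundSub θ ∧ ∀ c ∈ C, holds θ c

/-- θ unifies M and N. -/
def Unifies (θ : ℕ → MsgV) (M N : MsgV) : Prop := substT θ M = substT θ N

/-- θ is the most general unifier of M and N (variable-conservative, as is
standard: it only moves variables of M and N, within those variables). -/
def IsMGU (θ : ℕ → MsgV) (M N : MsgV) : Prop :=
  Unifies θ M N ∧
  (∀ σ, Unifies σ M N → ∃ ρ, ∀ x, σ x = substT ρ (θ x)) ∧
  (∀ x, θ x ≠ var x → x ∈ varsT M ∪ varsT N ∧ varsT (θ x) ⊆ varsT M ∪ varsT N)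

/-- The identity substitution. -/
def idSub : ℕ → MsgV := fun x => var x

/-- One-step constraint reduction (rules C1–C5), labelled by the associated
substitution. -/
inductive Red : List Constraint → (ℕ → MsgV) → List Constraint → Prop
  | c1 {C₁ C₂ : List Constraint} {S : Finset MsgV} {M N : MsgV} {θ : ℕ → MsgV} :
      (∀ x, M ≠ var x) → N ∈ S → IsMGU θ M N →
      Red (C₁ ++ Constraint.rightc S M :: C₂) θ
          (C₁.map (csub θ) ++ C₂.map (csub θ))
  | c2p {C₁ C₂ : List Constraint} {S : Finset MsgV} {M N : MsgV} :
      Red (C₁ ++ Constraint.rightc S (pair M N) :: C₂) idSub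
          (C₁ ++ Constraint.rightc S M :: Constraint.rightc S N :: C₂)
  | c2e {C₁ C₂ : List Constraint} {S : Finset MsgV} {M N : MsgV} :
      Red (C₁ ++ Constraint.rightc S (enc M N) :: C₂) idSub
          (C₁ ++ Constraint.rightc S M :: Constraint.rightc S N :: C₂)
  | c3 {C₁ C₂ : List Constraint} {S : Finset MsgV} {M : MsgV} :
      Red (C₁ ++ Constraint.proper S M :: C₂) idSub
          (C₁ ++ Constraint.rightc S M :: C₂)
  | c4 {C₁ C₂ : List Constraint} {S : Finset MsgV} {M N U : MsgV} :
      pair M N ∉ S →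
      Red (C₁ ++ Constraint.proper (insert (pair M N) S) U :: C₂) idSub
          (C₁ ++ Constraint.proper (insert M (insert N S)) U :: C₂)
  | c5 {C₁ C₂ : List Constraint} {S : Finset MsgV} {M N U : MsgV} :
      enc M N ∉ S →
      Red (C₁ ++ Constraint.proper (insert (enc M N) S) U :: C₂) idSub
          (C₁ ++ Constraint.rightc (insert (enc M N) S) N ::
                Constraint.proper (insert M (insert N S)) U :: C₂)

/-- Multi-step constraint reduction, accumulating the composed substitution. -/
inductive RedStar : List Constraint → (ℕ → MsgV) → List Constraint → Prop
  | refl (C) : RedStar C idSub C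
  | step {C θ C' σ C''} : Red C θ C' → RedStar C' σ C'' →
      RedStar C (comp θ σ) C''

/-- Solved form: every constraint is Σ ⊩_R? x with x a variable. -/
def Solved (C : List Constraint) : Prop :=
  ∀ c ∈ C, ∃ (S : Finset MsgV) (x : ℕ), c = Constraint.rightc S (var x)

/-- The i-th constraint of a list (with a default). -/
def nth (C : List Constraint) (i : ℕ) : Constraint :=
  C.getD i (Constraint.proper ∅ (name 0))

/-- Deducibility constraint systems (Definition 6.5 of the paper):
(1) for i < j and every solution θ of the prefix before position j, the
θ-instance of the part of the j-th left side whose variables all occur in the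
i-th left side deduces the θ-instance of every member of the i-th left side;
(2) every variable first occurs on the right side of a constraint whose left
side does not contain it. -/
def DCSystem (C : List Constraint) : Prop :=
  (∀ i j, i < j → j < C.length →
      ∀ θ, Solution θ (C.take j) →
        ∀ N ∈ (nth C i).lhs,
          SC ((((nth C j).lhs).filter
                (fun m => varsT m ⊆ varsS ((nth C i).lhs))).image (substT θ))
             (substT θ N)) ∧
  (∀ x, (∃ c ∈ C, x ∈ varsT c.rhs ∪ varsS c.lhs) →
      ∃ i, i < C.length ∧ x ∈ varsT ((nth C i).rhs) ∧
           x ∉ varsS ((nth C i).lhs) ∧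
           ∀ j < i, x ∉ varsT ((nth C j).rhs) ∪ varsS ((nth C j).lhs))

/-! ### Auxiliary lemmas -/

section Aux

lemma substT_comp (θ σ : ℕ → MsgV) (m : MsgV) :
    substT (comp θ σ) m = substT σ (substT θ m) := by
  induction m with
  | name a => rfl
  | var x => rfl
  | pair a b iha ihb => simp [substT, iha, ihb]
  | enc a b iha ihb => simp [substT, iha, ihb]

lemma varsT_substT (θ : ℕ → MsgV) (m : MsgV) :
    varsT (substT θ m) = (varsT m).biUnion (fun y => varsT (θ y)) := by
  induction m with
  | name a => simp [substT, varsT]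
  | var x => simp [substT, varsT]
  | pair a b iha ihb =>
      simp only [substT, varsT, iha, ihb]; ext x
      simp only [Finset.mem_union, Finset.mem_biUnion]
      constructor
      · rintro (⟨y,hy,hx⟩|⟨y,hy,hx⟩) <;> exact ⟨y, by tauto, hx⟩
      · rintro ⟨y,(hy|hy),hx⟩
        · exact Or.inl ⟨y, hy, hx⟩
        · exact Or.inr ⟨y, hy, hx⟩
  | enc a b iha ihb =>
      simp only [substT, varsT, iha, ihb]; ext x
      simp only [Finset.mem_union, Finset.mem_biUnion]
      constructor
      · rintro (⟨y,hy,hx⟩|⟨y,hy,hx⟩) <;> exact ⟨y, by tauto, hx⟩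
      · rintro ⟨y,(hy|hy),hx⟩
        · exact Or.inl ⟨y, hy, hx⟩
        · exact Or.inr ⟨y, hy, hx⟩

lemma varsS_image (θ : ℕ → MsgV) (S : Finset MsgV) :
    varsS (S.image (substT θ)) = (varsS S).biUnion (fun y => varsT (θ y)) := by
  ext x
  simp only [varsS, Finset.mem_biUnion, Finset.mem_image]
  constructor
  · rintro ⟨_, ⟨m, hm, rfl⟩, hx⟩
    rw [varsT_substT] at hx
    rcases Finset.mem_biUnion.1 hx with ⟨y, hy, hxy⟩
    exact ⟨y, ⟨m, hm, hy⟩, hxy⟩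
  · rintro ⟨y, ⟨m, hm, hy⟩, hxy⟩
    refine ⟨substT θ m, ⟨m, hm, rfl⟩, ?_⟩
    rw [varsT_substT]
    exact Finset.mem_biUnion.2 ⟨y, hy, hxy⟩

lemma groundSub_comp (θ σ : ℕ → MsgV) (hσ : groundSub σ) : groundSub (comp θ σ) := by
  intro x
  show groundT (substT σ (θ x))
  unfold groundT
  rw [varsT_substT]
  apply Finset.eq_empty_of_forall_notMem
  intro y hy
  rcases Finset.mem_biUnion.1 hy with ⟨z, _, hz⟩
  rw [hσ z] at hz
  exact absurd hz (Finset.notMem_empty y)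

lemma image_comp_sub (θ σ : ℕ → MsgV) (S : Finset MsgV) :
    S.image (substT (comp θ σ)) = (S.image (substT θ)).image (substT σ) := by
  rw [Finset.image_image]
  exact Finset.image_congr (fun m _ => substT_comp θ σ m)

lemma holds_csub (θ σ : ℕ → MsgV) (c : Constraint) :
    holds σ (csub θ c) ↔ holds (comp θ σ) c := by
  cases c with
  | proper S M => simp [holds, csub, image_comp_sub, substT_comp]
  | rightc S M => simp [holds, csub, image_comp_sub, substT_comp]

/-! ### Deduction machinery -/

lemma SCR_replace {Δ Γ : Finset MsgV} {T : MsgV} (h : SCR Δ T)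
    (hΓ : ∀ A ∈ Δ, SCR Γ A) : SCR Γ T := by
  induction h with
  | id hm => exact hΓ _ hm
  | pR _ _ ih1 ih2 => exact SCR.pR ih1 ih2
  | eR _ _ ih1 ih2 => exact SCR.eR ih1 ih2

lemma SC_of_SCR {Γ : Finset MsgV} {T : MsgV} (h : SCR Γ T) : SC Γ T := by
  induction h with
  | id hm => exact SC.id hm
  | pR _ _ ih1 ih2 => exact SC.pR ih1 ih2
  | eR _ _ ih1 ih2 => exact SC.eR ih1 ih2

lemma SC_weaken {Γ Γ' : Finset MsgV} {T : MsgV} (h : SC Γ T) (hsub : Γ ⊆ Γ') :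
    SC Γ' T := by
  induction h generalizing Γ' with
  | id hm => exact SC.id (hsub hm)
  | pR _ _ ih1 ih2 => exact SC.pR (ih1 hsub) (ih2 hsub)
  | eR _ _ ih1 ih2 => exact SC.eR (ih1 hsub) (ih2 hsub)
  | pL hm _ ih =>
      exact SC.pL (hsub hm) (ih (Finset.insert_subset_insert _ (Finset.insert_subset_insert _ hsub)))
  | eL hm _ _ ihk ih =>
      exact SC.eL (hsub hm) (ihk hsub)
        (ih (Finset.insert_subset_insert _ (Finset.insert_subset_insert _ hsub)))

lemma SC_pair_inv {Γ : Finset MsgV} {T : MsgV} (h : SC Γ T) :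
    ∀ M N, T = pair M N → SC Γ M ∧ SC Γ N := by
  induction h with
  | id hm =>
      rintro M N rfl
      exact ⟨SC.pL hm (SC.id (by simp)), SC.pL hm (SC.id (by simp))⟩
  | pR h1 h2 =>
      rintro M N hMN
      cases hMN
      exact ⟨h1, h2⟩
  | eR _ _ _ _ => intro M N h; cases h
  | pL hm _ ih =>
      rintro M N rfl
      obtain ⟨h1, h2⟩ := ih M N rfl
      exact ⟨SC.pL hm h1, SC.pL hm h2⟩
  | eL hm hk _ _ ih =>
      rintro M N rfl
      obtain ⟨h1, h2⟩ := ih M N rfl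
      exact ⟨SC.eL hm hk h1, SC.eL hm hk h2⟩

lemma SC_enc_inv {Γ : Finset MsgV} {T : MsgV} (h : SC Γ T) :
    ∀ M K, T = enc M K → SC Γ K → SC Γ M := by
  induction h with
  | id hm =>
      rintro M K rfl hK
      exact SC.eL hm hK (SC.id (by simp))
  | pR _ _ _ _ => intro M K h; cases h
  | eR h1 _ _ _ =>
      rintro M K hMK
      cases hMK
      intro _; exact h1
  | pL hm _ ih =>
      rintro M K rfl hK
      exact SC.pL hm (ih M K rfl (SC_weaken hK (by intro x hx; simp [hx])))
  | eL hm hk _ _ ih =>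
      rintro M K rfl hK
      exact SC.eL hm hk (ih M K rfl (SC_weaken hK (by intro x hx; simp [hx])))

/-- Natural-deduction style Dolev-Yao deduction (fixed context). -/
inductive Ded : Finset MsgV → MsgV → Prop
  | ax {Γ M} : M ∈ Γ → Ded Γ M
  | pI {Γ M N} : Ded Γ M → Ded Γ N → Ded Γ (pair M N)
  | eI {Γ M K} : Ded Γ M → Ded Γ K → Ded Γ (enc M K)
  | pE1 {Γ M N} : Ded Γ (pair M N) → Ded Γ M
  | pE2 {Γ M N} : Ded Γ (pair M N) → Ded Γ N
  | dE {Γ M K} : Ded Γ (enc M K) → Ded Γ K → Ded Γ M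

lemma Ded_replace {Δ Γ : Finset MsgV} {T : MsgV} (h : Ded Δ T)
    (hΓ : ∀ A ∈ Δ, Ded Γ A) : Ded Γ T := by
  induction h with
  | ax hm => exact hΓ _ hm
  | pI _ _ ih1 ih2 => exact Ded.pI ih1 ih2
  | eI _ _ ih1 ih2 => exact Ded.eI ih1 ih2
  | pE1 _ ih => exact Ded.pE1 ih
  | pE2 _ ih => exact Ded.pE2 ih
  | dE _ _ ih1 ih2 => exact Ded.dE ih1 ih2

lemma SC_of_Ded {Γ : Finset MsgV} {T : MsgV} (h : Ded Γ T) : SC Γ T := by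
  induction h with
  | ax hm => exact SC.id hm
  | pI _ _ ih1 ih2 => exact SC.pR ih1 ih2
  | eI _ _ ih1 ih2 => exact SC.eR ih1 ih2
  | pE1 _ ih => exact (SC_pair_inv ih _ _ rfl).1
  | pE2 _ ih => exact (SC_pair_inv ih _ _ rfl).2
  | dE _ _ ih1 ih2 => exact SC_enc_inv ih1 _ _ rfl ih2

lemma Ded_of_SC {Γ : Finset MsgV} {T : MsgV} (h : SC Γ T) : Ded Γ T := by
  induction h with
  | id hm => exact Ded.ax hm
  | pR _ _ ih1 ih2 => exact Ded.pI ih1 ih2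
  | eR _ _ ih1 ih2 => exact Ded.eI ih1 ih2
  | @pL Γ M N _ hm _ ih =>
      refine Ded_replace ih ?_
      intro A hA
      rcases Finset.mem_insert.1 hA with rfl | hA
      · exact Ded.pE1 (Ded.ax hm)
      rcases Finset.mem_insert.1 hA with rfl | hA
      · exact Ded.pE2 (Ded.ax hm)
      · exact Ded.ax hA
  | @eL Γ M K _ hm _ _ ihk ih =>
      refine Ded_replace ih ?_
      intro A hA
      rcases Finset.mem_insert.1 hA with rfl | hA
      · exact Ded.dE (Ded.ax hm) ihk
      rcases Finset.mem_insert.1 hA with rfl | hA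
      · exact ihk
      · exact Ded.ax hA

/-- Multicut for SC. -/
lemma SC_multicut {Δ Γ : Finset MsgV} {T : MsgV} (h : SC Δ T)
    (hΓ : ∀ A ∈ Δ, SC Γ A) : SC Γ T :=
  SC_of_Ded (Ded_replace (Ded_of_SC h) (fun A hA => Ded_of_SC (hΓ A hA)))

/-! ### List indexing helpers -/

lemma nth_append_lt {C₁ L : List Constraint} {i : ℕ} (h : i < C₁.length) :
    nth (C₁ ++ L) i = nth C₁ i := List.getD_append _ _ _ _ h

lemma nth_append_ge {C₁ L : List Constraint} {i : ℕ} (h : C₁.length ≤ i) :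
    nth (C₁ ++ L) i = nth L (i - C₁.length) := List.getD_append_right _ _ _ _ h

lemma nth_cons_zero {c : Constraint} {L : List Constraint} : nth (c :: L) 0 = c := rfl

lemma nth_cons_succ {c : Constraint} {L : List Constraint} {i : ℕ} :
    nth (c :: L) (i + 1) = nth L i := rfl

lemma nth_mem {l : List Constraint} {i : ℕ} (h : i < l.length) : nth l i ∈ l := by
  rw [nth, List.getD_eq_getElem _ _ h]
  exact List.getElem_mem _

lemma mem_nth {l : List Constraint} {c : Constraint} (h : c ∈ l) :
    ∃ i, i < l.length ∧ nth l i = c := by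
  obtain ⟨i, hi, rfl⟩ := List.mem_iff_getElem.1 h
  exact ⟨i, hi, by rw [nth, List.getD_eq_getElem _ _ hi]⟩

lemma nth_map (θ : ℕ → MsgV) {l : List Constraint} {i : ℕ} (h : i < l.length) :
    nth (l.map (csub θ)) i = csub θ (nth l i) := by
  rw [nth, nth, List.getD_eq_getElem?_getD, List.getD_eq_getElem?_getD,
    List.getElem?_map, List.getElem?_eq_getElem h]
  rfl

lemma mem_take_mono {l : List Constraint} {c : Constraint} {a b : ℕ} (h : c ∈ l.take a)
    (hab : a ≤ b) : c ∈ l.take b := by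
  have : l.take a = (l.take b).take a := by
    rw [List.take_take, Nat.min_eq_left hab]
  rw [this] at h
  exact List.take_subset _ _ h

lemma lhs_csub (θ : ℕ → MsgV) (c : Constraint) :
    (csub θ c).lhs = c.lhs.image (substT θ) := by cases c <;> rfl

lemma rhs_csub (θ : ℕ → MsgV) (c : Constraint) :
    (csub θ c).rhs = substT θ c.rhs := by cases c <;> rfl

lemma varsS_insert (m : MsgV) (S : Finset MsgV) :
    varsS (insert m S) = varsT m ∪ varsS S := Finset.biUnion_insert

lemma subset_varsS {m : MsgV} {S : Finset MsgV} (h : m ∈ S) : varsT m ⊆ varsS S :=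
  Finset.subset_biUnion_of_mem _ h

/-- Generic preservation lemma: replacing one constraint by one constraint. -/
lemma dcs_one_for_one (C₁ C₂ : List Constraint) (d d' : Constraint)
    (ha : varsS d'.lhs = varsS d.lhs)
    (hb : d'.rhs = d.rhs)
    (hd : ∀ θ : ℕ → MsgV, holds θ d' → holds θ d)
    (he : ∀ (θ : ℕ → MsgV) (Γ : Finset MsgV),
        (∀ A ∈ d.lhs, SC Γ (substT θ A)) → ∀ B ∈ d'.lhs, SC Γ (substT θ B))
    (hf : ∀ (vs : Finset ℕ) (θ : ℕ → MsgV),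
        ∀ B ∈ d.lhs.filter (fun m => varsT m ⊆ vs),
          SC ((d'.lhs.filter (fun m => varsT m ⊆ vs)).image (substT θ)) (substT θ B))
    (hC : DCSystem (C₁ ++ d :: C₂)) :
    DCSystem (C₁ ++ d' :: C₂) := by
  set k := C₁.length with hk
  set O := C₁ ++ d :: C₂ with hO
  set L := C₁ ++ d' :: C₂ with hL
  have hlen : L.length = O.length := by simp [hO, hL]
  have hklen : k < O.length := by simp [hO, hk]
  have hnthk : nth L k = d' := by
    rw [hL, nth_append_ge le_rfl, Nat.sub_self, nth_cons_zero]
  have hnthkO : nth O k = d := by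
    rw [hO, nth_append_ge le_rfl, Nat.sub_self, nth_cons_zero]
  have hnth : ∀ i, i ≠ k → nth L i = nth O i := by
    intro i hi
    rcases Nat.lt_or_ge i k with h | h
    · rw [hL, hO, nth_append_lt h, nth_append_lt h]
    · have h' : k + 1 ≤ i := by omega
      rw [hL, hO, nth_append_ge (le_of_lt (by omega)), nth_append_ge (le_of_lt (by omega))]
      have : i - k = (i - k - 1) + 1 := by omega
      rw [this, nth_cons_succ, nth_cons_succ]
  constructor
  · intro i j hij hj θ hθ
    -- solutions of prefixes of the new list are solutions of prefixes of the old one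
    have hsol : ∀ jj, jj ≤ j → Solution θ (O.take jj) := by
      intro jj hjj
      refine ⟨hθ.1, ?_⟩
      intro c hc
      rw [hO, List.take_append] at hc
      rcases List.mem_append.1 hc with hc | hc
      · refine hθ.2 c ?_
        rw [hL, List.take_append]
        exact List.mem_append.2 (Or.inl (mem_take_mono hc hjj))
      · rcases Nat.lt_or_ge k jj with hkj | hkj
        · have h1 : jj - k = (jj - k - 1) + 1 := by omega
          rw [h1, List.take_succ_cons] at hc
          rcases List.mem_cons.1 hc with rfl | hc
          · refine hd θ (hθ.2 d' ?_)
            rw [hL, List.take_append]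
            refine List.mem_append.2 (Or.inr ?_)
            have h2 : j - k = (j - k - 1) + 1 := by omega
            rw [h2, List.take_succ_cons]
            exact List.mem_cons_self
          · refine hθ.2 c ?_
            rw [hL, List.take_append]
            refine List.mem_append.2 (Or.inr ?_)
            have h2 : j - k = (j - k - 1) + 1 := by omega
            rw [h2, List.take_succ_cons]
            exact List.mem_cons_of_mem _ (mem_take_mono hc (by omega))
        · rw [Nat.sub_eq_zero_of_le hkj] at hc
          simp at hc
    have hj' : j < O.length := by omega
    rcases eq_or_ne j k with rfl | hjk
    · -- j = k, i < k
      have hik : i ≠ k := by omega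
      rw [hnth i hik, hnthk]
      intro N₀ hN₀
      have base := hC.1 i k hij hj' θ (hsol k le_rfl)
      rw [hnthkO] at base
      refine SC_multicut (base N₀ hN₀) ?_
      intro A hA
      obtain ⟨B, hB, rfl⟩ := Finset.mem_image.1 hA
      exact hf _ θ B hB
    · rcases eq_or_ne i k with rfl | hik
      · -- i = k < j
        rw [hnth j hjk, hnthk]
        have base := hC.1 k j hij hj' θ (hsol j le_rfl)
        rw [hnthkO] at base
        rw [ha]
        exact he θ _ base
      · rw [hnth i hik, hnth j hjk]
        have base := hC.1 i j hij hj' θ (hsol j le_rfl)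
        exact base
  · intro x hex
    have hexO : ∃ c ∈ O, x ∈ varsT c.rhs ∪ varsS c.lhs := by
      obtain ⟨c, hc, hx⟩ := hex
      rw [hL] at hc
      rcases List.mem_append.1 hc with hc | hc
      · exact ⟨c, by rw [hO]; exact List.mem_append.2 (Or.inl hc), hx⟩
      · rcases List.mem_cons.1 hc with rfl | hc
        · refine ⟨d, by rw [hO]; exact List.mem_append.2 (Or.inr (List.mem_cons_self)), ?_⟩
          rw [hb, ha] at hx
          exact hx
        · exact ⟨c, by rw [hO]; exact List.mem_append.2 (Or.inr (List.mem_cons_of_mem _ hc)), hx⟩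
    obtain ⟨i, hi, h1, h2, h3⟩ := hC.2 x hexO
    have hvars : ∀ p, (x ∈ varsT ((nth L p).rhs) ↔ x ∈ varsT ((nth O p).rhs)) ∧
        (x ∈ varsS ((nth L p).lhs) ↔ x ∈ varsS ((nth O p).lhs)) := by
      intro p
      rcases eq_or_ne p k with rfl | hp
      · rw [hnthk, hnthkO, hb, ha]
        exact ⟨Iff.rfl, Iff.rfl⟩
      · rw [hnth p hp]
        exact ⟨Iff.rfl, Iff.rfl⟩
    refine ⟨i, by omega, (hvars i).1.2 h1, fun hmem => h2 ((hvars i).2.1 hmem), ?_⟩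
    intro j hji hmem
    refine h3 j hji ?_
    rcases Finset.mem_union.1 hmem with hm | hm
    · exact Finset.mem_union.2 (Or.inl ((hvars j).1.1 hm))
    · exact Finset.mem_union.2 (Or.inr ((hvars j).2.1 hm))

/-- Generic preservation lemma: replacing one constraint by two constraints. -/
lemma dcs_two_for_one (C₁ C₂ : List Constraint) (d d₁ d₂ : Constraint)
    (ha1 : varsS d₁.lhs = varsS d.lhs)
    (ha2 : varsS d₂.lhs = varsS d.lhs)
    (hb1 : varsT d₁.rhs ⊆ varsT d.rhs ∪ varsS d.lhs)
    (hb2 : varsT d₂.rhs ⊆ varsT d.rhs ∪ varsS d.lhs)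
    (hc : ∀ x, x ∈ varsT d.rhs → x ∉ varsS d.lhs →
        x ∈ varsT d₁.rhs ∨ (x ∈ varsT d₂.rhs ∧ x ∉ varsT d₁.rhs))
    (hd : ∀ θ : ℕ → MsgV, holds θ d₁ → holds θ d₂ → holds θ d)
    (he1 : ∀ (θ : ℕ → MsgV) (Γ : Finset MsgV),
        (∀ A ∈ d.lhs, SC Γ (substT θ A)) → ∀ B ∈ d₁.lhs, SC Γ (substT θ B))
    (he2 : ∀ (θ : ℕ → MsgV) (Γ : Finset MsgV), holds θ d₁ →
        (∀ A ∈ d.lhs, SC Γ (substT θ A)) → ∀ B ∈ d₂.lhs, SC Γ (substT θ B))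
    (hf1 : ∀ (vs : Finset ℕ) (θ : ℕ → MsgV),
        ∀ B ∈ d.lhs.filter (fun m => varsT m ⊆ vs),
          SC ((d₁.lhs.filter (fun m => varsT m ⊆ vs)).image (substT θ)) (substT θ B))
    (hf2 : ∀ (vs : Finset ℕ) (θ : ℕ → MsgV),
        ∀ B ∈ d.lhs.filter (fun m => varsT m ⊆ vs),
          SC ((d₂.lhs.filter (fun m => varsT m ⊆ vs)).image (substT θ)) (substT θ B))
    (hg : ∀ θ : ℕ → MsgV, ∀ N₀ ∈ d₁.lhs,
        SC ((d₂.lhs.filter (fun m => varsT m ⊆ varsS d₁.lhs)).image (substT θ))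
          (substT θ N₀))
    (hC : DCSystem (C₁ ++ d :: C₂)) :
    DCSystem (C₁ ++ d₁ :: d₂ :: C₂) := by
  set k := C₁.length with hk
  set O := C₁ ++ d :: C₂ with hO
  set L := C₁ ++ d₁ :: d₂ :: C₂ with hL
  have hlen : L.length = O.length + 1 := by simp [hO, hL]; omega
  have hklen : k < O.length := by simp [hO, hk]
  have hnthk1 : nth L k = d₁ := by
    rw [hL, nth_append_ge le_rfl, Nat.sub_self, nth_cons_zero]
  have hnthk2 : nth L (k + 1) = d₂ := by
    rw [hL, nth_append_ge (by omega)]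
    have : k + 1 - k = 1 := by omega
    rw [this]; rfl
  have hnthkO : nth O k = d := by
    rw [hO, nth_append_ge le_rfl, Nat.sub_self, nth_cons_zero]
  have hnth_lt : ∀ i, i < k → nth L i = nth O i := by
    intro i hi
    rw [hL, hO, nth_append_lt hi, nth_append_lt hi]
  have hnth_gt : ∀ i, k + 2 ≤ i → nth L i = nth O (i - 1) := by
    intro i hi
    rw [hL, hO, nth_append_ge (by omega), nth_append_ge (by omega)]
    have h1 : i - k = (i - k - 2) + 1 + 1 := by omega
    have h2 : i - 1 - k = (i - k - 2) + 1 := by omega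
    rw [h1, h2, nth_cons_succ, nth_cons_succ, nth_cons_succ]
  have hmemd1 : ∀ j, k + 1 ≤ j → d₁ ∈ L.take j := by
    intro j hj
    rw [hL, List.take_append]
    refine List.mem_append.2 (Or.inr ?_)
    have : j - k = (j - k - 1) + 1 := by omega
    rw [this, List.take_succ_cons]
    exact List.mem_cons_self
  have hmemd2 : ∀ j, k + 2 ≤ j → d₂ ∈ L.take j := by
    intro j hj
    rw [hL, List.take_append]
    refine List.mem_append.2 (Or.inr ?_)
    have : j - k = (j - k - 2) + 1 + 1 := by omega
    rw [this, List.take_succ_cons, List.take_succ_cons]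
    exact List.mem_cons_of_mem _ (List.mem_cons_self)
  constructor
  · intro i j hij hj θ hθ
    have hsol : ∀ jj, jj ≤ j → (k < jj → jj + 1 ≤ j) → Solution θ (O.take jj) := by
      intro jj hjj hjj2
      refine ⟨hθ.1, ?_⟩
      intro c hc
      rw [hO, List.take_append] at hc
      rcases List.mem_append.1 hc with hc | hc
      · refine hθ.2 c ?_
        rw [hL, List.take_append]
        exact List.mem_append.2 (Or.inl (mem_take_mono hc hjj))
      · rcases Nat.lt_or_ge k jj with hkj | hkj
        · have hjk2 : k + 2 ≤ j := by omega
          have h1 : jj - k = (jj - k - 1) + 1 := by omega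
          rw [h1, List.take_succ_cons] at hc
          rcases List.mem_cons.1 hc with rfl | hc
          · exact hd θ (hθ.2 d₁ (hmemd1 j (by omega))) (hθ.2 d₂ (hmemd2 j hjk2))
          · refine hθ.2 c ?_
            rw [hL, List.take_append]
            refine List.mem_append.2 (Or.inr ?_)
            have h2 : j - k = (j - k - 2) + 1 + 1 := by omega
            rw [h2, List.take_succ_cons, List.take_succ_cons]
            exact List.mem_cons_of_mem _
              (List.mem_cons_of_mem _ (mem_take_mono hc (by omega)))
        · rw [Nat.sub_eq_zero_of_le hkj] at hc
          simp at hc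
    rcases Nat.lt_or_ge j k with hjlt | hjge
    · -- j < k
      rw [hnth_lt i (by omega), hnth_lt j hjlt]
      exact hC.1 i j hij (by omega) θ (hsol j le_rfl (by omega))
    rcases eq_or_ne j k with rfl | hjk
    · -- j = k, i < k
      rw [hnth_lt i hij, hnthk1]
      intro N₀ hN₀
      have base := hC.1 i k hij (by omega) θ (hsol k le_rfl (by omega))
      rw [hnthkO] at base
      refine SC_multicut (base N₀ hN₀) ?_
      intro A hA
      obtain ⟨B, hB, rfl⟩ := Finset.mem_image.1 hA
      exact hf1 _ θ B hB
    rcases eq_or_ne j (k + 1) with rfl | hjk1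
    · -- j = k + 1
      rw [hnthk2]
      rcases eq_or_ne i k with rfl | hik
      · -- i = k: the genuinely new pair
        rw [hnthk1]
        exact hg θ
      · -- i < k
        have hiklt : i < k := by omega
        rw [hnth_lt i hiklt]
        intro N₀ hN₀
        have base := hC.1 i k hiklt (by omega) θ (hsol k (by omega) (by omega))
        rw [hnthkO] at base
        refine SC_multicut (base N₀ hN₀) ?_
        intro A hA
        obtain ⟨B, hB, rfl⟩ := Finset.mem_image.1 hA
        exact hf2 _ θ B hB
    · -- j ≥ k + 2
      have hjge2 : k + 2 ≤ j := by omega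
      have hsolj : Solution θ (O.take (j - 1)) := hsol (j - 1) (by omega) (by omega)
      have hjO : j - 1 < O.length := by omega
      rw [hnth_gt j hjge2]
      rcases Nat.lt_or_ge i k with hilt | hige
      · rw [hnth_lt i hilt]
        exact hC.1 i (j - 1) (by omega) hjO θ hsolj
      rcases eq_or_ne i k with rfl | hik
      · -- i = k
        rw [hnthk1, ha1]
        have base := hC.1 k (j - 1) (by omega) hjO θ hsolj
        rw [hnthkO] at base
        exact he1 θ _ base
      rcases eq_or_ne i (k + 1) with rfl | hik1
      · -- i = k + 1
        rw [hnthk2, ha2]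
        have base := hC.1 k (j - 1) (by omega) hjO θ hsolj
        rw [hnthkO] at base
        exact he2 θ _ (hθ.2 d₁ (hmemd1 j (by omega))) base
      · -- i ≥ k + 2
        rw [hnth_gt i (by omega)]
        exact hC.1 (i - 1) (j - 1) (by omega) hjO θ hsolj
  · intro x hex
    have hexO : ∃ c ∈ O, x ∈ varsT c.rhs ∪ varsS c.lhs := by
      obtain ⟨c, hc, hx⟩ := hex
      have hdmem : d ∈ O := by rw [hO]; exact List.mem_append.2 (Or.inr (List.mem_cons_self))
      rw [hL] at hc
      rcases List.mem_append.1 hc with hc | hc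
      · exact ⟨c, by rw [hO]; exact List.mem_append.2 (Or.inl hc), hx⟩
      rcases List.mem_cons.1 hc with rfl | hc
      · refine ⟨d, hdmem, ?_⟩
        rcases Finset.mem_union.1 hx with hx | hx
        · exact hb1 hx
        · rw [ha1] at hx; exact Finset.mem_union.2 (Or.inr hx)
      rcases List.mem_cons.1 hc with rfl | hc
      · refine ⟨d, hdmem, ?_⟩
        rcases Finset.mem_union.1 hx with hx | hx
        · exact hb2 hx
        · rw [ha2] at hx; exact Finset.mem_union.2 (Or.inr hx)
      · exact ⟨c, by
          rw [hO]
          exact List.mem_append.2 (Or.inr (List.mem_cons_of_mem _ hc)), hx⟩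
    obtain ⟨i, hi, h1, h2, h3⟩ := hC.2 x hexO
    -- blocks before the first occurrence contain no x
    have hblock : ∀ p, p < i → x ∉ varsT ((nth O p).rhs) ∪ varsS ((nth O p).lhs) := h3
    have hprior : ∀ j', (∀ p, p < i → (j' ≠ p → True)) → True := fun _ _ => trivial
    rcases Nat.lt_or_ge i k with hilt | hige
    · -- i < k : same position works
      refine ⟨i, by omega, ?_, ?_, ?_⟩
      · rw [hnth_lt i hilt]; exact h1
      · rw [hnth_lt i hilt]; exact h2
      · intro j hji
        rw [hnth_lt j (by omega)]
        exact h3 j hji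
    rcases eq_or_ne i k with rfl | hik
    · -- i = k : choose k or k+1 according to hc
      rw [hnthkO] at h1 h2
      rcases hc x h1 h2 with hx1 | ⟨hx2, hx1⟩
      · refine ⟨k, by omega, ?_, ?_, ?_⟩
        · rw [hnthk1]; exact hx1
        · rw [hnthk1, ha1]; exact h2
        · intro j hj
          rw [hnth_lt j hj]
          exact h3 j hj
      · refine ⟨k + 1, by omega, ?_, ?_, ?_⟩
        · rw [hnthk2]; exact hx2
        · rw [hnthk2, ha2]; exact h2
        · intro j hj
          rcases eq_or_ne j k with rfl | hjk
          · rw [hnthk1]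
            intro hmem
            rcases Finset.mem_union.1 hmem with hm | hm
            · exact hx1 hm
            · rw [ha1] at hm; exact h2 hm
          · rw [hnth_lt j (by omega)]
            exact h3 j (by omega)
    · -- i > k : position i + 1
      have hik1 : k + 1 ≤ i := by omega
      refine ⟨i + 1, by omega, ?_, ?_, ?_⟩
      · rw [hnth_gt (i + 1) (by omega)]; simpa using h1
      · rw [hnth_gt (i + 1) (by omega)]; simpa using h2
      · intro j hj
        have hknotx := h3 k (by omega)
        rw [hnthkO] at hknotx
        rcases Nat.lt_or_ge j k with hjlt | hjge
        · rw [hnth_lt j hjlt]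
          exact h3 j (by omega)
        rcases eq_or_ne j k with rfl | hjk
        · rw [hnthk1]
          intro hmem
          rcases Finset.mem_union.1 hmem with hm | hm
          · exact hknotx (hb1 hm)
          · rw [ha1] at hm
            exact hknotx (Finset.mem_union.2 (Or.inr hm))
        rcases eq_or_ne j (k + 1) with rfl | hjk1
        · rw [hnthk2]
          intro hmem
          rcases Finset.mem_union.1 hmem with hm | hm
          · exact hknotx (hb2 hm)
          · rw [ha2] at hm
            exact hknotx (Finset.mem_union.2 (Or.inr hm))
        · rw [hnth_gt j (by omega)]
          exact h3 (j - 1) (by omega)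

/-- Preservation for rule C1. -/
lemma dcs_c1 (C₁ C₂ : List Constraint) (S : Finset MsgV) (M N : MsgV)
    (θ : ℕ → MsgV) (hN : N ∈ S) (hmgu : IsMGU θ M N)
    (hC : DCSystem (C₁ ++ Constraint.rightc S M :: C₂)) :
    DCSystem (C₁.map (csub θ) ++ C₂.map (csub θ)) := by
  set k := C₁.length with hk
  set O := C₁ ++ Constraint.rightc S M :: C₂ with hO
  set L := C₁.map (csub θ) ++ C₂.map (csub θ) with hL
  have hlen : L.length = k + C₂.length := by simp [hL, hk]
  have hlenO : O.length = k + 1 + C₂.length := by simp [hO, hk]; omega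
  have hnthkO : nth O k = Constraint.rightc S M := by
    rw [hO, nth_append_ge le_rfl, Nat.sub_self, nth_cons_zero]
  -- old index of a new index
  have hnth : ∀ i, i < L.length →
      nth L i = csub θ (nth O (if i < k then i else i + 1)) := by
    intro i hi
    rcases Nat.lt_or_ge i k with h | h
    · simp only [if_pos h]
      rw [hL, hO, nth_append_lt (by simpa [hk] using h), nth_append_lt h,
        nth_map θ (by simpa [hk] using h)]
    · simp only [if_neg (by omega : ¬ i < k)]
      rw [hL, hO, nth_append_ge (by simpa [hk] using h), nth_append_ge (by omega)]
      have h1 : i + 1 - k = (i - k) + 1 := by omega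
      rw [h1, nth_cons_succ]
      have h2 : i - C₁.length = i - k := by rw [hk]
      have h3 : i - k < C₂.length := by omega
      rw [show (C₁.map (csub θ)).length = k by simp [hk], nth_map θ h3]
  -- instance of the removed constraint holds under any composed substitution
  have hholdsM : ∀ σ : ℕ → MsgV, holds (comp θ σ) (Constraint.rightc S M) := by
    intro σ
    show SCR (S.image (substT (comp θ σ))) (substT (comp θ σ) M)
    have : substT (comp θ σ) M = substT (comp θ σ) N := by
      rw [substT_comp, substT_comp, hmgu.1]
    rw [this]
    exact SCR.id (Finset.mem_image_of_mem _ hN)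
  constructor
  · intro i j hij hj σ hσ
    set θ' := comp θ σ with hθ'
    set oi := fun n => if n < k then n else n + 1 with hoi
    have hoimono : oi i < oi j := by simp only [hoi]; split <;> split <;> omega
    have hsolO : Solution θ' (O.take (oi j)) := by
      refine ⟨groundSub_comp θ σ hσ.1, ?_⟩
      intro c hc
      rw [hO, List.take_append] at hc
      rcases List.mem_append.1 hc with hc | hc
      · -- c ∈ C₁.take (oi j)
        rw [← holds_csub]
        refine hσ.2 _ ?_
        rw [hL, List.take_append]
        refine List.mem_append.2 (Or.inl ?_)
        have hcle : c ∈ C₁ := List.take_subset _ _ hc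
        rcases Nat.lt_or_ge j k with hjk | hjk
        · have : oi j = j := by simp [hoi, hjk]
          rw [this] at hc
          rw [← List.map_take]
          exact List.mem_map_of_mem hc
        · have : (C₁.map (csub θ)).take j = C₁.map (csub θ) := by
            apply List.take_of_length_le; simp [hk]; omega
          rw [this]
          exact List.mem_map_of_mem hcle
      · -- c ∈ (rightc S M :: C₂).take (oi j - k)
        have hjk : k ≤ j := by
          by_contra hcon
          have : oi j = j := by simp [hoi]; omega
          rw [this, Nat.sub_eq_zero_of_le (by omega)] at hc
          simp at hc
        have hoij : oi j = j + 1 := by simp [hoi]; omega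
        rw [hoij] at hc
        have h1 : j + 1 - k = (j - k) + 1 := by omega
        rw [h1, List.take_succ_cons] at hc
        rcases List.mem_cons.1 hc with rfl | hc
        · exact hholdsM σ
        · rw [← holds_csub]
          refine hσ.2 _ ?_
          rw [hL, List.take_append]
          refine List.mem_append.2 (Or.inr ?_)
          rw [show (C₁.map (csub θ)).length = k by simp [hk], ← List.map_take]
          exact List.mem_map_of_mem hc
    have hoijlt : oi j < O.length := by simp only [hoi]; split <;> omega
    have base := hC.1 (oi i) (oi j) hoimono hoijlt θ' hsolO
    rw [hnth i (by omega), hnth j hj]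
    rw [lhs_csub, lhs_csub]
    intro N₀' hN₀'
    obtain ⟨N₀, hN₀, rfl⟩ := Finset.mem_image.1 hN₀'
    have hsc := base N₀ hN₀
    have hrw : substT σ (substT θ N₀) = substT θ' N₀ := (substT_comp θ σ N₀).symm
    rw [hrw]
    refine SC_weaken hsc ?_
    -- context inclusion
    intro A hA
    obtain ⟨B, hB, rfl⟩ := Finset.mem_image.1 hA
    rw [Finset.mem_filter] at hB
    rw [substT_comp]
    refine Finset.mem_image_of_mem _ ?_
    rw [Finset.mem_filter]
    refine ⟨Finset.mem_image_of_mem _ hB.1, ?_⟩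
    rw [varsT_substT, varsS_image]
    exact Finset.biUnion_subset_biUnion_of_subset_left _ hB.2
  · intro x hex
    -- occurrence predicate in the new list
    have hexn : ∃ n, n < L.length ∧
        x ∈ varsT ((nth L n).rhs) ∪ varsS ((nth L n).lhs) := by
      obtain ⟨c, hc, hx⟩ := hex
      obtain ⟨n, hn, rfl⟩ := mem_nth hc
      exact ⟨n, hn, hx⟩
    classical
    set P := fun n => n < L.length ∧
        x ∈ varsT ((nth L n).rhs) ∪ varsS ((nth L n).lhs) with hP
    have hfind := Nat.find_spec hexn
    set i' := Nat.find hexn with hi'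
    have hmin : ∀ m, m < i' → ¬ P m := fun m hm => Nat.find_min hexn hm
    -- main argument : x does not occur in the left side at position i'
    have hnotlhs : x ∉ varsS ((nth L i').lhs) := by
      intro hxl
      set p := if i' < k then i' else i' + 1 with hp
      have hplt : p < O.length := by simp only [hp]; split <;> omega
      rw [hnth i' hfind.1, lhs_csub, varsS_image] at hxl
      obtain ⟨z, hz, hxz⟩ := Finset.mem_biUnion.1 hxl
      -- first occurrence of z in the old system
      have hzex : ∃ c ∈ O, z ∈ varsT c.rhs ∪ varsS c.lhs :=
        ⟨nth O p, nth_mem hplt, Finset.mem_union.2 (Or.inr hz)⟩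
      obtain ⟨f, hf, hfr, hfl, hfmin⟩ := hC.2 z hzex
      have hfp : f < p := by
        rcases Nat.lt_trichotomy f p with h | h | h
        · exact h
        · exact absurd (h ▸ hz) hfl
        · exact absurd (Finset.mem_union.2 (Or.inr hz)) (hfmin p h)
      -- produce an occurrence of x in the new list strictly before i'
      by_cases hfk : f = k
      · -- f = k : use the unifier to move to a variable of N
        subst hfk
        rw [hnthkO] at hfr
        have hxM : x ∈ varsT (substT θ M) := by
          rw [varsT_substT]
          exact Finset.mem_biUnion.2 ⟨z, hfr, hxz⟩
        rw [hmgu.1, varsT_substT] at hxM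
        obtain ⟨w, hw, hxw⟩ := Finset.mem_biUnion.1 hxM
        have hwS : w ∈ varsS S := Finset.mem_biUnion.2 ⟨N, hN, hw⟩
        have hwex : ∃ c ∈ O, w ∈ varsT c.rhs ∪ varsS c.lhs := by
          refine ⟨Constraint.rightc S M, ?_, Finset.mem_union.2 (Or.inr hwS)⟩
          rw [hO]; exact List.mem_append.2 (Or.inr (List.mem_cons_self))
        obtain ⟨g, hg, hgr, hgl, hgmin⟩ := hC.2 w hwex
        have hgk : g < k := by
          rcases Nat.lt_trichotomy g k with h | h | h
          · exact h
          · exfalso; apply hgl; rw [h, hnthkO]; exact hwS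
          · exfalso
            refine hgmin k h ?_
            rw [hnthkO]
            exact Finset.mem_union.2 (Or.inr hwS)
        -- g < k ≤ i', occurrence at position g in the new list
        have hik : k ≤ i' := by
          by_contra hcon
          simp only [hp, if_pos (by omega : i' < k)] at hplt hfp ⊢
          omega
        refine hmin g (by omega) ⟨by omega, ?_⟩
        rw [hnth g (by omega), if_pos (by omega : g < k), rhs_csub]
        refine Finset.mem_union.2 (Or.inl ?_)
        rw [varsT_substT]
        exact Finset.mem_biUnion.2 ⟨w, hgr, hxw⟩
      · -- f ≠ k : occurrence at the image of position f
        have hfp' : f < (if i' < k then i' else i' + 1) := by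
          simpa only [hp] using hfp
        have hkey : ∃ q, q < L.length ∧ q < i' ∧ (if q < k then q else q + 1) = f := by
          rcases Nat.lt_or_ge f k with h | h
          · refine ⟨f, by omega, ?_, by rw [if_pos h]⟩
            rcases Nat.lt_or_ge i' k with h2 | h2
            · rw [if_pos h2] at hfp'; exact hfp'
            · omega
          · have h3 : ¬ i' < k := by
              intro h4; rw [if_pos h4] at hfp'; omega
            rw [if_neg h3] at hfp'
            have h5 : k < f := by omega
            refine ⟨f - 1, by omega, by omega, ?_⟩
            rw [if_neg (by omega : ¬ f - 1 < k)]
            omega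
        obtain ⟨q, hqlt, hqi, hqoi⟩ := hkey
        refine hmin q hqi ⟨hqlt, ?_⟩
        rw [hnth q hqlt, hqoi, rhs_csub]
        refine Finset.mem_union.2 (Or.inl ?_)
        rw [varsT_substT]
        exact Finset.mem_biUnion.2 ⟨z, hfr, hxz⟩
    refine ⟨i', hfind.1, ?_, hnotlhs, ?_⟩
    · rcases Finset.mem_union.1 hfind.2 with h | h
      · exact h
      · exact absurd h hnotlhs
    · intro j hj hmem
      exact hmin j hj ⟨by omega, hmem⟩

end Aux

/-- Constraint reduction preserves deducibility constraint systems. -/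
theorem reduction_preserves_dcs (C : List Constraint) (θ : ℕ → MsgV)
    (C' : List Constraint) (hC : DCSystem C) (hred : Red C θ C') :
    DCSystem C' := by
  cases hred with
  | @c1 C₁ C₂ S M N θ hMv hN hmgu =>
      exact dcs_c1 C₁ C₂ S M N θ hN hmgu hC
  | @c2p C₁ C₂ S M N =>
      refine dcs_two_for_one C₁ C₂ (.rightc S (pair M N)) (.rightc S M) (.rightc S N)
        rfl rfl ?_ ?_ ?_ ?_ (fun θ Γ h => h) (fun θ Γ _ h => h) ?_ ?_ ?_ hC
      · intro x hx
        exact Finset.mem_union_left _ (Finset.mem_union_left _ hx)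
      · intro x hx
        exact Finset.mem_union_left _ (Finset.mem_union_right _ hx)
      · intro x hx hnl
        by_cases hM : x ∈ varsT M
        · exact Or.inl hM
        · refine Or.inr ⟨?_, hM⟩
          rcases Finset.mem_union.1 hx with h | h
          · exact absurd h hM
          · exact h
      · intro θ h1 h2
        exact SCR.pR h1 h2
      · intro vs θ B hB
        exact SC.id (Finset.mem_image_of_mem _ hB)
      · intro vs θ B hB
        exact SC.id (Finset.mem_image_of_mem _ hB)
      · intro θ N₀ hN₀
        exact SC.id (Finset.mem_image_of_mem _
          (Finset.mem_filter.2 ⟨hN₀, subset_varsS hN₀⟩))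
  | @c2e C₁ C₂ S M N =>
      refine dcs_two_for_one C₁ C₂ (.rightc S (enc M N)) (.rightc S M) (.rightc S N)
        rfl rfl ?_ ?_ ?_ ?_ (fun θ Γ h => h) (fun θ Γ _ h => h) ?_ ?_ ?_ hC
      · intro x hx
        exact Finset.mem_union_left _ (Finset.mem_union_left _ hx)
      · intro x hx
        exact Finset.mem_union_left _ (Finset.mem_union_right _ hx)
      · intro x hx hnl
        by_cases hM : x ∈ varsT M
        · exact Or.inl hM
        · refine Or.inr ⟨?_, hM⟩
          rcases Finset.mem_union.1 hx with h | h
          · exact absurd h hM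
          · exact h
      · intro θ h1 h2
        exact SCR.eR h1 h2
      · intro vs θ B hB
        exact SC.id (Finset.mem_image_of_mem _ hB)
      · intro vs θ B hB
        exact SC.id (Finset.mem_image_of_mem _ hB)
      · intro θ N₀ hN₀
        exact SC.id (Finset.mem_image_of_mem _
          (Finset.mem_filter.2 ⟨hN₀, subset_varsS hN₀⟩))
  | @c3 C₁ C₂ S M =>
      refine dcs_one_for_one C₁ C₂ (.proper S M) (.rightc S M)
        rfl rfl ?_ (fun θ Γ h => h) ?_ hC
      · intro θ h
        exact SC_of_SCR h
      · intro vs θ B hB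
        exact SC.id (Finset.mem_image_of_mem _ hB)
  | @c4 C₁ C₂ S M N U hnot =>
      refine dcs_one_for_one C₁ C₂ (.proper (insert (pair M N) S) U)
        (.proper (insert M (insert N S)) U) ?_ rfl ?_ ?_ ?_ hC
      · show varsS (insert M (insert N S)) = varsS (insert (pair M N) S)
        rw [varsS_insert, varsS_insert, varsS_insert]
        show varsT M ∪ (varsT N ∪ varsS S) = varsT M ∪ varsT N ∪ varsS S
        rw [Finset.union_assoc]
      · intro θ h
        show SC ((insert (pair M N) S).image (substT θ)) (substT θ U)
        have h0 : SC ((insert M (insert N S)).image (substT θ)) (substT θ U) := h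
        have h' : SC (insert (substT θ M) (insert (substT θ N)
            (S.image (substT θ)))) (substT θ U) := by
          rwa [Finset.image_insert, Finset.image_insert] at h0
        rw [Finset.image_insert]
        refine SC.pL (M := substT θ M) (N := substT θ N)
          (Finset.mem_insert_self _ _) ?_
        refine SC_weaken h' (Finset.insert_subset_insert _
          (Finset.insert_subset_insert _ (Finset.subset_insert _ _)))
      · intro θ Γ h B hB
        rcases Finset.mem_insert.1 hB with rfl | hB
        · exact (SC_pair_inv (h _ (Finset.mem_insert_self _ _)) (substT θ B)
            (substT θ N) rfl).1
        rcases Finset.mem_insert.1 hB with rfl | hB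
        · exact (SC_pair_inv (h _ (Finset.mem_insert_self _ _)) (substT θ M)
            (substT θ B) rfl).2
        · exact h B (Finset.mem_insert_of_mem hB)
      · intro vs θ B hB
        rw [Finset.mem_filter] at hB
        rcases Finset.mem_insert.1 hB.1 with rfl | hBS
        · have h1 : varsT M ⊆ vs := fun x hx => hB.2 (Finset.mem_union_left _ hx)
          have h2 : varsT N ⊆ vs := fun x hx => hB.2 (Finset.mem_union_right _ hx)
          refine SC.pR (SC.id ?_) (SC.id ?_)
          · exact Finset.mem_image_of_mem _
              (Finset.mem_filter.2 ⟨Finset.mem_insert_self _ _, h1⟩)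
          · exact Finset.mem_image_of_mem _ (Finset.mem_filter.2
              ⟨Finset.mem_insert_of_mem (Finset.mem_insert_self _ _), h2⟩)
        · exact SC.id (Finset.mem_image_of_mem _ (Finset.mem_filter.2
            ⟨Finset.mem_insert_of_mem (Finset.mem_insert_of_mem hBS), hB.2⟩))
  | @c5 C₁ C₂ S M N U hnot =>
      refine dcs_two_for_one C₁ C₂ (.proper (insert (enc M N) S) U)
        (.rightc (insert (enc M N) S) N) (.proper (insert M (insert N S)) U)
        rfl ?_ ?_ ?_ ?_ ?_ (fun θ Γ h => h) ?_ ?_ ?_ ?_ hC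
      · show varsS (insert M (insert N S)) = varsS (insert (enc M N) S)
        rw [varsS_insert, varsS_insert, varsS_insert]
        show varsT M ∪ (varsT N ∪ varsS S) = varsT M ∪ varsT N ∪ varsS S
        rw [Finset.union_assoc]
      · intro x hx
        refine Finset.mem_union_right _ ?_
        show x ∈ varsS (insert (enc M N) S)
        rw [varsS_insert]
        exact Finset.mem_union_left _ (Finset.mem_union_right _ hx)
      · intro x hx
        exact Finset.mem_union_left _ hx
      · intro x hx hnl
        refine Or.inr ⟨hx, ?_⟩
        intro hxN
        apply hnl
        show x ∈ varsS (insert (enc M N) S)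
        rw [varsS_insert]
        exact Finset.mem_union_left _ (Finset.mem_union_right _ hxN)
      · intro θ h1 h2
        show SC ((insert (enc M N) S).image (substT θ)) (substT θ U)
        have h0 : SC ((insert M (insert N S)).image (substT θ)) (substT θ U) := h2
        have h2' : SC (insert (substT θ M) (insert (substT θ N)
            (S.image (substT θ)))) (substT θ U) := by
          rwa [Finset.image_insert, Finset.image_insert] at h0
        refine SC.eL (M := substT θ M) (K := substT θ N)
          (Finset.mem_image_of_mem _ (Finset.mem_insert_self _ _))
          (SC_of_SCR h1) ?_
        refine SC_weaken h2' (Finset.insert_subset_insert _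
          (Finset.insert_subset_insert _
            (Finset.image_subset_image (Finset.subset_insert _ _))))
      · intro θ Γ h1 h B hB
        have hNder : SC Γ (substT θ N) := by
          refine SC_multicut (SC_of_SCR h1) ?_
          intro A hA
          obtain ⟨A₀, hA₀, rfl⟩ := Finset.mem_image.1 hA
          exact h A₀ hA₀
        rcases Finset.mem_insert.1 hB with rfl | hB
        · exact SC_enc_inv (h _ (Finset.mem_insert_self _ _)) (substT θ B)
            (substT θ N) rfl hNder
        rcases Finset.mem_insert.1 hB with rfl | hB
        · exact hNder
        · exact h B (Finset.mem_insert_of_mem hB)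
      · intro vs θ B hB
        exact SC.id (Finset.mem_image_of_mem _ hB)
      · intro vs θ B hB
        rw [Finset.mem_filter] at hB
        rcases Finset.mem_insert.1 hB.1 with rfl | hBS
        · have h1 : varsT M ⊆ vs := fun x hx => hB.2 (Finset.mem_union_left _ hx)
          have h2 : varsT N ⊆ vs := fun x hx => hB.2 (Finset.mem_union_right _ hx)
          refine SC.eR (SC.id ?_) (SC.id ?_)
          · exact Finset.mem_image_of_mem _
              (Finset.mem_filter.2 ⟨Finset.mem_insert_self _ _, h1⟩)
          · exact Finset.mem_image_of_mem _ (Finset.mem_filter.2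
              ⟨Finset.mem_insert_of_mem (Finset.mem_insert_self _ _), h2⟩)
        · exact SC.id (Finset.mem_image_of_mem _ (Finset.mem_filter.2
            ⟨Finset.mem_insert_of_mem (Finset.mem_insert_of_mem hBS), hB.2⟩))
      · intro θ N₀ hN₀
        have hsub : varsT (enc M N) ⊆ varsS (insert (enc M N) S) := by
          rw [varsS_insert]
          exact Finset.subset_union_left
        have hMf : M ∈ (insert M (insert N S)).filter
            (fun m => varsT m ⊆ varsS ((Constraint.rightc (insert (enc M N) S) N).lhs)) :=
          Finset.mem_filter.2 ⟨Finset.mem_insert_self _ _,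
            fun x hx => hsub (Finset.mem_union_left _ hx)⟩
        have hNf : N ∈ (insert M (insert N S)).filter
            (fun m => varsT m ⊆ varsS ((Constraint.rightc (insert (enc M N) S) N).lhs)) :=
          Finset.mem_filter.2 ⟨Finset.mem_insert_of_mem (Finset.mem_insert_self _ _),
            fun x hx => hsub (Finset.mem_union_right _ hx)⟩
        rcases Finset.mem_insert.1 hN₀ with rfl | hS
        · exact SC.eR (SC.id (Finset.mem_image_of_mem _ hMf))
            (SC.id (Finset.mem_image_of_mem _ hNf))
        · refine SC.id (Finset.mem_image_of_mem _ (Finset.mem_filter.2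
            ⟨Finset.mem_insert_of_mem (Finset.mem_insert_of_mem hS),
              subset_varsS (Finset.mem_insert_of_mem hS)⟩))
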